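/- If a language L ⊆ Σ* is generated by an admissible signed grammar over Σ, then there exist ordinary context-free grammars G₁ and G₂ over Σ, each having only finitely many parse trees for every word, such that for every w ∈ Σ*: a_w(G₁) − a_w(G₂) = 1 if w ∈ L, and a_w(G₁) − a_w(G₂) = 0 if w ∉ L, where a_w(Gᵢ) denotes the number of parse trees of Gᵢ with yield w. -/

import Mathlib

/-- A parse-tree node: either a terminal leaf or an internal node labeled by a
nonterminal with a list of children. -/
inductive PTree (N : Type) (T : Type) : Type where
  | leaf (t : T) : PTree N T
  | node (A : N) (children : List (PTree N T)) : PTree N T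

namespace PTree

variable {N T : Type}

/-- The symbol (nonterminal or terminal) labeling the root of a tree. -/
def toSymbol : PTree N T → N ⊕ T
  | leaf t => Sum.inr t
  | node A _ => Sum.inl A

/-- The yield of a parse tree: the word spelled by its leaves. -/
def yield : PTree N T → List T
  | leaf t => [t]
  | node _ cs => cs.attach.flatMap (fun c => yield c.1)
decreasing_by simp only [PTree.node.sizeOf_spec]; have h := List.sizeOf_lt_of_mem c.2; omega

/-- The sign of a parse tree w.r.t. a sign assignment on productions:
the product of the signs of the productions used at its nodes. -/
def sign (σ : N × List (N ⊕ T) → ℤ) : PTree N T → ℤ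
  | leaf _ => 1
  | node A cs => σ (A, cs.map toSymbol) * (cs.attach.map (fun c => sign σ c.1)).prod
decreasing_by simp only [PTree.node.sizeOf_spec]; have h := List.sizeOf_lt_of_mem c.2; omega

/-- Validity of a parse tree w.r.t. a set of productions: at every internal node,
the node label together with the list of symbols of its children is a production. -/
inductive Valid (R : Set (N × List (N ⊕ T))) : PTree N T → Prop where
  | leaf (t : T) : Valid R (PTree.leaf t)
  | node (A : N) (cs : List (PTree N T)) :
      (A, cs.map toSymbol) ∈ R → (∀ c ∈ cs, Valid R c) → Valid R (PTree.node A cs)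

end PTree

/-- A signed grammar over a (finite) terminal alphabet `T`: a context-free grammar
with finitely many nonterminals and productions, together with a sign `1` or `-1`
attached to each production. -/
structure SignedGrammar (T : Type) : Type 1 where
  /-- the type of nonterminals -/
  N : Type
  finN : Finite N
  /-- the start symbol -/
  start : N
  /-- the productions `A → α`, `α ∈ (N ∪ T)*` -/
  rules : Set (N × List (N ⊕ T))
  finRules : rules.Finite
  /-- the sign of each production -/
  sign : N × List (N ⊕ T) → ℤ
  sign_valid : ∀ r ∈ rules, sign r = 1 ∨ sign r = -1

namespace SignedGrammar

variable {T : Type}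

/-- A parse tree over the grammar: a valid tree whose root is labeled by the start symbol. -/
def IsParseTree (G : SignedGrammar T) (t : PTree G.N T) : Prop :=
  PTree.Valid G.rules t ∧ t.toSymbol = Sum.inl G.start

/-- The set of parse trees over `G` with yield `w`. -/
def parseTreesOf (G : SignedGrammar T) (w : List T) : Set (PTree G.N T) :=
  {t | G.IsParseTree t ∧ t.yield = w}

/-- `G` is admissible if every word has only finitely many parse trees. -/
def Admissible (G : SignedGrammar T) : Prop :=
  ∀ w : List T, (G.parseTreesOf w).Finite

/-- `n_w(G)`: the sum of the signs of all parse trees over `G` with yield `w`. -/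
noncomputable def count (G : SignedGrammar T) (w : List T) : ℤ :=
  ∑ᶠ t ∈ G.parseTreesOf w, t.sign G.sign

/-- `G` generates the language `L` if `G` is admissible, `n_w(G) = 1` for every
`w ∈ L` and `n_w(G) = 0` for every `w ∉ L`. -/
def Generates (G : SignedGrammar T) (L : Language T) : Prop :=
  G.Admissible ∧ (∀ w ∈ L, G.count w = 1) ∧ (∀ w ∉ L, G.count w = 0)

/-- An ordinary context-free grammar: every production has sign `+1`. -/
def Ordinary (G : SignedGrammar T) : Prop :=
  ∀ r ∈ G.rules, G.sign r = 1

/-- The language generated by `G` in the usual sense: all yields of parse trees. -/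
def language (G : SignedGrammar T) : Language T :=
  {w | ∃ t : PTree G.N T, G.IsParseTree t ∧ t.yield = w}

/-- `G` is unambiguous if every word has at most one parse tree. -/
def Unambiguous (G : SignedGrammar T) : Prop :=
  ∀ t₁ t₂ : PTree G.N T, G.IsParseTree t₁ → G.IsParseTree t₂ →
    t₁.yield = t₂.yield → t₁ = t₂

/-- The number of parse trees of `G` with yield `w` (degree of ambiguity of `w`). -/
noncomputable def ambCount (G : SignedGrammar T) (w : List T) : ℕ :=
  Nat.card {t : PTree G.N T // t ∈ G.parseTreesOf w}

end SignedGrammar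


section Aux

namespace PTree

variable {N T : Type}

/-- Custom induction principle for parse trees. -/
theorem inductionOn' {motive : PTree N T → Prop}
    (leaf : ∀ t : T, motive (.leaf t))
    (node : ∀ (A : N) (cs : List (PTree N T)), (∀ c ∈ cs, motive c) → motive (.node A cs)) :
    ∀ t : PTree N T, motive t
  | .leaf t => leaf t
  | .node A cs => node A cs (fun c hc => inductionOn' leaf node c)
decreasing_by simp only [PTree.node.sizeOf_spec]; have h := List.sizeOf_lt_of_mem hc; omega

lemma attach_map_eq {α β : Type*} (cs : List α) (f : α → β) :
    (cs.attach.map fun c => f c.1) = cs.map f := by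
  conv_rhs => rw [← List.attach_map_subtype_val cs, List.map_map]
  rfl

lemma attach_flatMap_eq {α β : Type*} (cs : List α) (f : α → List β) :
    (cs.attach.flatMap fun c => f c.1) = cs.flatMap f := by
  conv_rhs => rw [← List.attach_map_subtype_val cs, List.flatMap_map]

@[simp] lemma yield_leaf (t : T) : (PTree.leaf t : PTree N T).yield = [t] := by
  rw [yield]

lemma yield_node (A : N) (cs : List (PTree N T)) :
    (PTree.node A cs).yield = cs.flatMap yield := by
  rw [yield, attach_flatMap_eq]

@[simp] lemma sign_leaf (σ : N × List (N ⊕ T) → ℤ) (t : T) :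
    (PTree.leaf t : PTree N T).sign σ = 1 := by rw [sign]

lemma sign_node (σ : N × List (N ⊕ T) → ℤ) (A : N) (cs : List (PTree N T)) :
    (PTree.node A cs).sign σ = σ (A, cs.map toSymbol) * (cs.map (sign σ)).prod := by
  rw [sign, attach_map_eq]

/-- Erase the boolean decorations of a parse tree. -/
def strip : PTree (N × Bool) T → PTree N T
  | .leaf t => .leaf t
  | .node A cs => .node A.1 (cs.attach.map fun c => strip c.1)
decreasing_by simp only [PTree.node.sizeOf_spec]; have h := List.sizeOf_lt_of_mem c.2; omega

@[simp] lemma strip_leaf (t : T) : (PTree.leaf t : PTree (N × Bool) T).strip = .leaf t := by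
  rw [strip]

lemma strip_node (A : N × Bool) (cs : List (PTree (N × Bool) T)) :
    (PTree.node A cs).strip = .node A.1 (cs.map strip) := by
  rw [strip, attach_map_eq]

/-- Decorate each node of a parse tree with the parity of the sign of its subtree. -/
def decorate (σ : N × List (N ⊕ T) → ℤ) : PTree N T → PTree (N × Bool) T
  | .leaf t => .leaf t
  | .node A cs => .node (A, decide (PTree.sign σ (.node A cs) = 1))
      (cs.attach.map fun c => decorate σ c.1)
decreasing_by simp only [PTree.node.sizeOf_spec]; have h := List.sizeOf_lt_of_mem c.2; omega

@[simp] lemma decorate_leaf (σ : N × List (N ⊕ T) → ℤ) (t : T) :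
    (PTree.leaf t : PTree N T).decorate σ = .leaf t := by rw [decorate]

lemma decorate_node (σ : N × List (N ⊕ T) → ℤ) (A : N) (cs : List (PTree N T)) :
    (PTree.node A cs).decorate σ
      = .node (A, decide (PTree.sign σ (.node A cs) = 1)) (cs.map (decorate σ)) := by
  rw [decorate, attach_map_eq]

lemma strip_decorate (σ : N × List (N ⊕ T) → ℤ) (t : PTree N T) :
    (t.decorate σ).strip = t := by
  induction t using inductionOn' with
  | leaf t => simp
  | node A cs ih =>
      rw [decorate_node, strip_node, List.map_map]
      conv_rhs => rw [← List.map_id cs]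
      exact congrArg (PTree.node A) (List.map_congr_left fun c hc => ih c hc)

lemma yield_strip (t : PTree (N × Bool) T) : t.strip.yield = t.yield := by
  induction t using inductionOn' with
  | leaf t => simp
  | node A cs ih =>
      rw [strip_node, yield_node, yield_node, List.flatMap_map]
      exact List.flatMap_congr fun c hc => ih c hc

lemma yield_decorate (σ : N × List (N ⊕ T) → ℤ) (t : PTree N T) :
    (t.decorate σ).yield = t.yield := by
  conv_rhs => rw [← strip_decorate σ t]
  exact (yield_strip _).symm

end PTree

/-- The sign of a list of integers each equal to `±1` is `±1`. -/
lemma list_prod_pm (l : List ℤ) (h : ∀ x ∈ l, x = 1 ∨ x = -1) :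
    l.prod = 1 ∨ l.prod = -1 := by
  induction l with
  | nil => simp
  | cons a l ih =>
      rcases h a (by simp) with ha | ha <;>
      rcases ih (fun x hx => h x (by simp [hx])) with hl | hl <;>
      simp [ha, hl]

end Aux


section Main

open PTree

variable {T : Type}

lemma PTree.sign_pm {N : Type} {R : Set (N × List (N ⊕ T))} {σ : N × List (N ⊕ T) → ℤ}
    (hσ : ∀ r ∈ R, σ r = 1 ∨ σ r = -1) :
    ∀ {t : PTree N T}, PTree.Valid R t → t.sign σ = 1 ∨ t.sign σ = -1 := by
  intro t h
  induction h with
  | leaf t => simp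
  | node A cs hmem hcs ih =>
      rw [sign_node]
      have hp : (cs.map (sign σ)).prod = 1 ∨ (cs.map (sign σ)).prod = -1 := by
        refine list_prod_pm _ ?_
        intro x hx
        obtain ⟨c, hc, rfl⟩ := List.mem_map.1 hx
        exact ih c hc
      rcases hσ _ hmem with h1 | h1 <;> rcases hp with h2 | h2 <;> simp [h1, h2]

lemma bsgn_decide {x : ℤ} (h : x = 1 ∨ x = -1) :
    (if decide (x = 1) then (1:ℤ) else -1) = x := by
  rcases h with h | h <;> simp [h]

namespace SignedGrammar

/-- The sign represented by a boolean. -/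
def bsgn (b : Bool) : ℤ := if b then 1 else -1

/-- The sign attached to a decorated symbol. -/
def ssgn {N : Type} : (N × Bool) ⊕ T → ℤ
  | .inl (_, b) => bsgn b
  | .inr _ => 1

/-- Erase the decoration of a symbol. -/
def sstrip {N : Type} : (N × Bool) ⊕ T → N ⊕ T
  | .inl (A, _) => .inl A
  | .inr t => .inr t

@[simp] lemma sstrip_inl {N : Type} (A : N) (b : Bool) :
    (sstrip (.inl (A, b)) : N ⊕ T) = .inl A := rfl
@[simp] lemma sstrip_inr {N : Type} (t : T) : (sstrip (.inr t) : N ⊕ T) = .inr t := rfl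

lemma toSymbol_strip {N : Type} (t : PTree (N × Bool) T) :
    t.strip.toSymbol = sstrip t.toSymbol := by
  cases t with
  | leaf t => simp [toSymbol]
  | node A cs => rw [strip_node]; rfl

lemma toSymbol_decorate {N : Type} (σ : N × List (N ⊕ T) → ℤ) (t : PTree N T) :
    sstrip ((t.decorate σ).toSymbol) = t.toSymbol := by
  cases t with
  | leaf t => simp [toSymbol]
  | node A cs => rw [decorate_node]; rfl

lemma ssgn_toSymbol_decorate {N : Type} {R : Set (N × List (N ⊕ T))}
    {σ : N × List (N ⊕ T) → ℤ} (hσ : ∀ r ∈ R, σ r = 1 ∨ σ r = -1)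
    {t : PTree N T} (h : PTree.Valid R t) :
    ssgn ((t.decorate σ).toSymbol) = t.sign σ := by
  cases t with
  | leaf t => simp [toSymbol, ssgn]
  | node A cs =>
      rw [decorate_node]
      show bsgn (decide (PTree.sign σ (.node A cs) = 1)) = _
      unfold bsgn
      exact bsgn_decide (PTree.sign_pm hσ h)

/-- The fibers of `sstrip` on lists are finite. -/
lemma sstrip_fibers_finite {N : Type} (α : List (N ⊕ T)) :
    {β : List ((N × Bool) ⊕ T) | β.map sstrip = α}.Finite := by
  induction α with
  | nil =>
      refine (Set.finite_singleton ([] : List ((N × Bool) ⊕ T))).subset ?_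
      intro β hβ
      simp only [Set.mem_setOf_eq, List.map_eq_nil_iff] at hβ
      simp [hβ]
  | cons a α ih =>
      have hfib : {s : (N × Bool) ⊕ T | sstrip s = a}.Finite := by
        cases a with
        | inl A =>
            refine ((Set.finite_singleton (Sum.inl (A, false))).insert
              (Sum.inl (A, true))).subset ?_
            rintro (⟨B, b⟩ | t) hs <;> simp only [Set.mem_setOf_eq] at hs
            · cases hs
              cases b <;> simp
            · cases hs
        | inr t =>
            refine (Set.finite_singleton (Sum.inr t : (N × Bool) ⊕ T)).subset ?_
            rintro (⟨B, b⟩ | t') hs <;> simp only [Set.mem_setOf_eq] at hs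
            · cases hs
            · cases hs; rfl
      refine (Set.Finite.image2 List.cons hfib ih).subset ?_
      intro β hβ
      cases β with
      | nil => simp at hβ
      | cons s β' =>
          simp only [Set.mem_setOf_eq, List.map_cons, List.cons.injEq] at hβ
          exact Set.mem_image2_of_mem hβ.1 hβ.2

variable (G : SignedGrammar T)

/-- The rules of the positive/negative part grammar: decorations of rules of `G`
whose decoration sign matches the sign of the rule times the children decorations. -/
def liftRules : Set ((G.N × Bool) × List ((G.N × Bool) ⊕ T)) :=
  {r | (r.1.1, r.2.map sstrip) ∈ G.rules ∧
    bsgn r.1.2 = G.sign (r.1.1, r.2.map sstrip) * (r.2.map ssgn).prod}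

lemma liftRules_finite : G.liftRules.Finite := by
  have hfin : ∀ p ∈ G.rules,
      ({r : (G.N × Bool) × List ((G.N × Bool) ⊕ T) |
        r.1.1 = p.1 ∧ r.2.map sstrip = p.2}).Finite := by
    intro p _
    refine ((Set.finite_univ.prod (sstrip_fibers_finite p.2)).image
      (fun q : Bool × List ((G.N × Bool) ⊕ T) => ((p.1, q.1), q.2))).subset ?_
    rintro ⟨⟨A, b⟩, β⟩ ⟨h1, h2⟩
    exact ⟨(b, β), ⟨Set.mem_univ _, h2⟩, by simp [← h1]⟩
  refine (G.finRules.biUnion hfin).subset ?_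
  intro r hr
  exact Set.mem_biUnion hr.1 ⟨rfl, rfl⟩

/-- The ordinary grammar whose parse trees are the parse trees of `G` of sign `bsgn b`. -/
def lift (b : Bool) : SignedGrammar T where
  N := G.N × Bool
  finN := by have := G.finN; exact inferInstance
  start := (G.start, b)
  rules := G.liftRules
  finRules := G.liftRules_finite
  sign := fun _ => 1
  sign_valid := fun _ _ => Or.inl rfl

lemma lift_ordinary (b : Bool) : (G.lift b).Ordinary := fun _ _ => rfl

lemma valid_decorate {t : PTree G.N T} (h : PTree.Valid G.rules t) :
    PTree.Valid G.liftRules (t.decorate G.sign) := by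
  induction h with
  | leaf t => rw [PTree.decorate_leaf]; exact PTree.Valid.leaf t
  | node A cs hmem hcs ih =>
      rw [decorate_node]
      have hsymb : ((cs.map (PTree.decorate G.sign)).map PTree.toSymbol).map sstrip
          = cs.map PTree.toSymbol := by
        simp only [List.map_map]
        exact List.map_congr_left fun c hc => toSymbol_decorate G.sign c
      refine PTree.Valid.node _ _ ⟨?_, ?_⟩ ?_
      · show (A, _) ∈ G.rules
        rw [hsymb]; exact hmem
      · show bsgn _ = G.sign (A, _) * _
        rw [hsymb]
        have hsgn : ((cs.map (PTree.decorate G.sign)).map PTree.toSymbol).map ssgn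
            = cs.map (PTree.sign G.sign) := by
          simp only [List.map_map]
          exact List.map_congr_left fun c hc =>
            ssgn_toSymbol_decorate G.sign_valid (hcs c hc)
        rw [hsgn]
        show bsgn (decide (PTree.sign G.sign (.node A cs) = 1)) = _
        rw [← sign_node]
        exact bsgn_decide (PTree.sign_pm G.sign_valid (PTree.Valid.node A cs hmem hcs))
      · intro c hc
        obtain ⟨c', hc', rfl⟩ := List.mem_map.1 hc
        exact ih c' hc'

lemma valid_strip : ∀ {t : PTree (G.N × Bool) T}, PTree.Valid G.liftRules t →
    PTree.Valid G.rules t.strip ∧ ssgn t.toSymbol = t.strip.sign G.sign := by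
  intro t h
  induction h with
  | leaf t =>
      constructor
      · rw [strip_leaf]; exact PTree.Valid.leaf t
      · rw [strip_leaf]; simp [toSymbol, ssgn]
  | node A cs hmem hcs ih =>
      obtain ⟨hmem1, hmem2⟩ := hmem
      have hsymb : (cs.map PTree.strip).map PTree.toSymbol
          = (cs.map PTree.toSymbol).map sstrip := by
        simp only [List.map_map]
        exact List.map_congr_left fun c hc => toSymbol_strip c
      constructor
      · rw [strip_node]
        refine PTree.Valid.node _ _ ?_ ?_
        · rw [hsymb]; exact hmem1
        · intro c hc
          obtain ⟨c', hc', rfl⟩ := List.mem_map.1 hc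
          exact (ih c' hc').1
      · show ssgn (Sum.inl A) = _
        rw [strip_node, sign_node, hsymb]
        show bsgn A.2 = _
        rw [hmem2]
        congr 1
        simp only [List.map_map]
        exact congrArg List.prod (List.map_congr_left fun c hc => (ih c hc).2)
  
lemma decorate_strip : ∀ {t : PTree (G.N × Bool) T}, PTree.Valid G.liftRules t →
    (t.strip).decorate G.sign = t := by
  intro t h
  induction h with
  | leaf t => simp
  | node A cs hmem hcs ih =>
      have hsgn : PTree.sign G.sign ((PTree.node A cs).strip) = bsgn A.2 :=
        ((G.valid_strip (PTree.Valid.node A cs hmem hcs)).2).symm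
      rw [strip_node] at hsgn ⊢
      rw [decorate_node]
      obtain ⟨A, b⟩ := A
      congr 1
      · simp only at hsgn
        cases b with
        | true => simp only [bsgn, if_pos rfl] at hsgn; simp [hsgn]
        | false =>
            simp only [bsgn, Bool.false_eq_true, if_neg] at hsgn
            simp only [hsgn]
            norm_num
      · simp only [List.map_map]
        conv_rhs => rw [← List.map_id cs]
        exact List.map_congr_left fun c hc => ih c hc

lemma image_strip (b : Bool) (w : List T) :
    PTree.strip '' ((G.lift b).parseTreesOf w)
      = {t | t ∈ G.parseTreesOf w ∧ t.sign G.sign = bsgn b} := by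
  ext t
  constructor
  · rintro ⟨t', ⟨⟨hv, hs⟩, hy⟩, rfl⟩
    have h := G.valid_strip hv
    refine ⟨⟨⟨h.1, ?_⟩, by rw [yield_strip]; exact hy⟩, ?_⟩
    · rw [toSymbol_strip]; erw [hs]; rfl
    · rw [← h.2]; erw [hs]; rfl
  · rintro ⟨⟨⟨hv, hs⟩, hy⟩, hsgn⟩
    refine ⟨t.decorate G.sign, ⟨⟨G.valid_decorate hv, ?_⟩, ?_⟩, strip_decorate _ _⟩
    · cases t with
      | leaf t => exact absurd hs (by simp [toSymbol])
      | node A cs =>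
          rw [decorate_node]
          have hA : A = G.start := by
            simpa [toSymbol] using hs
          subst hA
          show Sum.inl (G.start, _) = Sum.inl (G.start, b)
          congr 1
          have hsgn' : PTree.sign G.sign (PTree.node G.start cs) = bsgn b := hsgn
          cases b with
          | true => simp [bsgn] at hsgn'; simp [hsgn']
          | false =>
              simp only [bsgn, Bool.false_eq_true, if_neg] at hsgn'
              simp [hsgn']
    · exact (yield_decorate _ _).trans hy
  
lemma injOn_strip (b : Bool) (w : List T) :
    Set.InjOn PTree.strip ((G.lift b).parseTreesOf w) := by
  intro t₁ h₁ t₂ h₂ h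
  rw [← G.decorate_strip h₁.1.1, ← G.decorate_strip h₂.1.1, h]

lemma lift_admissible (hG : G.Admissible) (b : Bool) : (G.lift b).Admissible := by
  intro w
  refine Set.Finite.of_finite_image ?_ (G.injOn_strip b w)
  erw [G.image_strip b w]
  exact (hG w).subset fun t ht => ht.1

lemma ambCount_lift (b : Bool) (w : List T) :
    ((G.lift b).ambCount w : ℤ)
      = ({t | t ∈ G.parseTreesOf w ∧ t.sign G.sign = bsgn b}).ncard := by
  have h1 : (G.lift b).ambCount w = ((G.lift b).parseTreesOf w).ncard :=
    Nat.card_coe_set_eq _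
  rw [h1, ← G.image_strip b w, Set.ncard_image_of_injOn (G.injOn_strip b w)]
  rfl

end SignedGrammar

end Main


namespace SignedGrammar

variable {T : Type}

@[simp] lemma bsgn_true : bsgn true = 1 := rfl
@[simp] lemma bsgn_false : bsgn false = (-1) := rfl

lemma ambCount_diff (G : SignedGrammar T) (hadm : G.Admissible) (w : List T) :
    ((G.lift true).ambCount w : ℤ) - ((G.lift false).ambCount w : ℤ) = G.count w := by
  classical
  rw [G.ambCount_lift true w, G.ambCount_lift false w]
  have hcoe : G.parseTreesOf w = ↑(hadm w).toFinset := (Set.Finite.coe_toFinset _).symm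
  set F := (hadm w).toFinset with hF
  have hpm : ∀ t ∈ F, PTree.sign G.sign t = 1 ∨ PTree.sign G.sign t = -1 := fun t ht =>
    PTree.sign_pm G.sign_valid (((hadm w).mem_toFinset.1 ht).1.1)
  have hset : ∀ b : Bool, {t | t ∈ G.parseTreesOf w ∧ PTree.sign G.sign t = bsgn b}
      = ↑(F.filter (fun t => PTree.sign G.sign t = bsgn b)) := by
    intro b
    ext t
    simp only [Set.mem_setOf_eq, Finset.coe_filter, hF, Set.Finite.mem_toFinset]
  rw [hset true, hset false, Set.ncard_coe_finset, Set.ncard_coe_finset]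
  have hcount : G.count w = ∑ t ∈ F, PTree.sign G.sign t := by
    unfold count
    rw [hcoe, finsum_mem_coe_finset]
  rw [hcount, ← Finset.sum_filter_add_sum_filter_not F (fun t => PTree.sign G.sign t = 1)]
  have hfe : F.filter (fun t => ¬ PTree.sign G.sign t = 1)
      = F.filter (fun t => PTree.sign G.sign t = -1) := by
    apply Finset.filter_congr
    intro t ht
    rcases hpm t ht with h | h <;> simp [h]
  have e1 : ∑ t ∈ F.filter (fun t => PTree.sign G.sign t = 1), PTree.sign G.sign t
      = ((F.filter (fun t => PTree.sign G.sign t = 1)).card : ℤ) := by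
    rw [Finset.sum_congr rfl (fun t ht => (Finset.mem_filter.1 ht).2)]
    simp
  have e2 : ∑ t ∈ F.filter (fun t => ¬ PTree.sign G.sign t = 1), PTree.sign G.sign t
      = -((F.filter (fun t => PTree.sign G.sign t = -1)).card : ℤ) := by
    rw [hfe, Finset.sum_congr rfl (fun t ht => (Finset.mem_filter.1 ht).2)]
    simp
  rw [e1, e2]
  simp only [bsgn_true, bsgn_false]
  congr

end SignedGrammar


/-- If `L` is generated by an admissible signed grammar, then there are two ordinary
context-free grammars `G₁`, `G₂`, each with finitely many parse trees per word, such
that the difference of the numbers of parse trees for `w` is `1` if `w ∈ L` and `0`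
otherwise. -/
theorem signed_grammar_difference_of_CFGs
    (T : Type) [Fintype T] (L : Language T)
    (G : SignedGrammar T) (hG : G.Generates L) :
    ∃ G₁ G₂ : SignedGrammar T, G₁.Ordinary ∧ G₂.Ordinary ∧
      G₁.Admissible ∧ G₂.Admissible ∧
      (∀ w ∈ L, (G₁.ambCount w : ℤ) - (G₂.ambCount w : ℤ) = 1) ∧
      (∀ w ∉ L, (G₁.ambCount w : ℤ) - (G₂.ambCount w : ℤ) = 0) := by
  obtain ⟨hadm, h1, h0⟩ := hG
  refine ⟨G.lift true, G.lift false, G.lift_ordinary true, G.lift_ordinary false,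
    G.lift_admissible hadm true, G.lift_admissible hadm false,
    fun w hw => ?_, fun w hw => ?_⟩
  · rw [G.ambCount_diff hadm w]; exact h1 w hw
  · rw [G.ambCount_diff hadm w]; exact h0 w hw
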